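/- For every integer d ≥ 1, a, b real, and nonnegative measure γ on Ω×Ω ⊆ ℝᵈ×ℝᵈ with first marginal γ₀, if dual potentials φ₀, ψ₀ satisfy the feasibility constraint φ₀(x) + ψ₀(y) ≤ ½‖x−y‖² for all (x,y), and ĝr, ĝs are the marginals of a plan γ̂, then the identity UOT-objective(γ̂; μ̂, ν̂) − ∫ζ₀ dμ̂ − ∫ξ₀ dν̂ = ∫(½‖x−y‖² − φ₀(x) − ψ₀(y)) dγ̂ + KL(ĝr | e^{−φ₀}μ̂) + KL(ĝs | e^{−ψ₀}ν̂) holds, where ζ₀ = 1 − e^{−φ₀}, ξ₀ = 1 − e^{−ψ₀}, and the UOT objective is ∫½‖x−y‖² dγ̂ + KL(ĝr | μ̂) + KL(ĝs | ν̂). In particular, the right-hand side is a sum of three nonnegative terms. -/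

import Mathlib

open MeasureTheory

/-- Empirical UOT excess identity.  Let `μ̂, ν̂` be finite positive
measures on a bounded `Ω ⊆ ℝᵈ`, and let `γ̂` be a finite plan whose
marginals `ĝr, ĝs` have densities `fr, fs` with respect to `μ̂, ν̂`.
Let `(φ₀, ψ₀)` be dual potentials satisfying the feasibility constraint
`φ₀(x) + ψ₀(y) ≤ ½‖x − y‖²`, and set `ζ₀ = 1 − e^{−φ₀}`, `ξ₀ = 1 − e^{−ψ₀}`.
Then, writing `F(h) = h log h − h + 1`, the UOT objective satisfies
`[∫ ½‖x−y‖² dγ̂ + KL(ĝr|μ̂) + KL(ĝs|ν̂)] − ∫ζ₀ dμ̂ − ∫ξ₀ dν̂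
  = ∫ (½‖x−y‖² − φ₀(x) − ψ₀(y)) dγ̂ + KL(ĝr | e^{−φ₀}μ̂) + KL(ĝs | e^{−ψ₀}ν̂)`,
where `KL(ĝr | e^{−φ₀}μ̂) = ∫ e^{−φ₀}·F(fr·e^{φ₀}) dμ̂` (the density of
`ĝr` with respect to `e^{−φ₀}μ̂` is `fr·e^{φ₀}`); moreover each of the
three terms on the right-hand side is nonnegative. -/

lemma uot_ptwise (f t : ℝ) (hf : 0 ≤ f) :
    Real.exp (-t) * (f * Real.exp t * Real.log (f * Real.exp t)
      - f * Real.exp t + 1)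
    = (f * Real.log f - f + 1) + t * f + (Real.exp (-t) - 1) := by
  rcases eq_or_lt_of_le hf with h | h
  · simp [← h]
  · rw [Real.log_mul (ne_of_gt h) (Real.exp_ne_zero t), Real.log_exp]
    have := Real.exp_ne_zero t
    field_simp [Real.exp_neg]
    have h2 : Real.exp (-t) * Real.exp t = 1 := by rw [← Real.exp_add]; simp
    linear_combination (t * f - f + f * Real.log f) * h2

lemma uot_F_nonneg (t : ℝ) (ht : 0 ≤ t) : 0 ≤ t * Real.log t - t + 1 := by
  rcases eq_or_lt_of_le ht with h | h
  · simp [← h]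
  · have h1 : Real.log t⁻¹ ≤ t⁻¹ - 1 := Real.log_le_sub_one_of_pos (by positivity)
    rw [Real.log_inv] at h1
    have h2 : 1 - t⁻¹ ≤ Real.log t := by linarith
    have h3 : t * (1 - t⁻¹) ≤ t * Real.log t := mul_le_mul_of_nonneg_left h2 ht
    have h4 : t * (1 - t⁻¹) = t - 1 := by field_simp
    linarith

lemma uot_transfer {Ω' α : Type*} [MeasurableSpace Ω'] [MeasurableSpace α]
    (γ : MeasureTheory.Measure Ω') (μ : MeasureTheory.Measure α)
    (T : Ω' → α) (hT : Measurable T)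
    (fr g : α → ℝ) (hfrm : Measurable fr) (hg : Measurable g)
    (hfr0 : ∀ x, 0 ≤ fr x)
    (hmarg : γ.map T = μ.withDensity fun x => ENNReal.ofReal (fr x)) :
    ∫ z, g (T z) ∂γ = ∫ x, g x * fr x ∂μ := by
  rw [← MeasureTheory.integral_map hT.aemeasurable hg.aestronglyMeasurable, hmarg]
  have heq : (fun x => ENNReal.ofReal (fr x))
      = fun x => ((fr x).toNNReal : ENNReal) := rfl
  rw [heq, integral_withDensity_eq_integral_smul hfrm.real_toNNReal g]
  refine MeasureTheory.integral_congr_ae (Filter.Eventually.of_forall fun x => ?_)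
  simp [NNReal.smul_def, Real.coe_toNNReal _ (hfr0 x), mul_comm]

theorem stmt15 {d : ℕ} (hd : 1 ≤ d)
    (Ω : Set (EuclideanSpace ℝ (Fin d))) (hΩ : Bornology.IsBounded Ω)
    (μ ν : Measure (EuclideanSpace ℝ (Fin d)))
    [IsFiniteMeasure μ] [IsFiniteMeasure ν]
    (γ : Measure (EuclideanSpace ℝ (Fin d) × EuclideanSpace ℝ (Fin d)))
    [IsFiniteMeasure γ]
    (φ ψ : EuclideanSpace ℝ (Fin d) → ℝ)
    (hφm : Measurable φ) (hψm : Measurable ψ)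
    (fr fs : EuclideanSpace ℝ (Fin d) → ℝ)
    (hfrm : Measurable fr) (hfsm : Measurable fs)
    (hfr0 : ∀ x, 0 ≤ fr x) (hfs0 : ∀ y, 0 ≤ fs y)
    (hmarg1 : γ.map Prod.fst = μ.withDensity fun x => ENNReal.ofReal (fr x))
    (hmarg2 : γ.map Prod.snd = ν.withDensity fun y => ENNReal.ofReal (fs y))
    (hfeas : ∀ x y : EuclideanSpace ℝ (Fin d), φ x + ψ y ≤ ‖x - y‖ ^ 2 / 2)
    (hc : Integrable (fun z => ‖z.1 - z.2‖ ^ 2 / 2) γ)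
    (hφγ : Integrable (fun z => φ z.1) γ)
    (hψγ : Integrable (fun z => ψ z.2) γ)
    (hF1 : Integrable (fun x => fr x * Real.log (fr x) - fr x + 1) μ)
    (hF2 : Integrable (fun y => fs y * Real.log (fs y) - fs y + 1) ν)
    (hζ : Integrable (fun x => Real.exp (-φ x)) μ)
    (hξ : Integrable (fun y => Real.exp (-ψ y)) ν)
    (hφfr : Integrable (fun x => φ x * fr x) μ)
    (hψfs : Integrable (fun y => ψ y * fs y) ν) :
    ((∫ z, ‖z.1 - z.2‖ ^ 2 / 2 ∂γ)
        + (∫ x, (fr x * Real.log (fr x) - fr x + 1) ∂μ)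
        + (∫ y, (fs y * Real.log (fs y) - fs y + 1) ∂ν))
      - (∫ x, (1 - Real.exp (-φ x)) ∂μ) - (∫ y, (1 - Real.exp (-ψ y)) ∂ν)
    = (∫ z, (‖z.1 - z.2‖ ^ 2 / 2 - φ z.1 - ψ z.2) ∂γ)
      + (∫ x, Real.exp (-φ x) *
          (fr x * Real.exp (φ x) * Real.log (fr x * Real.exp (φ x))
            - fr x * Real.exp (φ x) + 1) ∂μ)
      + (∫ y, Real.exp (-ψ y) *
          (fs y * Real.exp (ψ y) * Real.log (fs y * Real.exp (ψ y))
            - fs y * Real.exp (ψ y) + 1) ∂ν)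
    ∧ 0 ≤ ∫ z, (‖z.1 - z.2‖ ^ 2 / 2 - φ z.1 - ψ z.2) ∂γ
    ∧ 0 ≤ ∫ x, Real.exp (-φ x) *
          (fr x * Real.exp (φ x) * Real.log (fr x * Real.exp (φ x))
            - fr x * Real.exp (φ x) + 1) ∂μ
    ∧ 0 ≤ ∫ y, Real.exp (-ψ y) *
          (fs y * Real.exp (ψ y) * Real.log (fs y * Real.exp (ψ y))
            - fs y * Real.exp (ψ y) + 1) ∂ν := by
  have hP : ∫ z, φ z.1 ∂γ = ∫ x, φ x * fr x ∂μ :=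
    uot_transfer γ μ Prod.fst measurable_fst fr φ hfrm hφm hfr0 hmarg1
  have hQ : ∫ z, ψ z.2 ∂γ = ∫ y, ψ y * fs y ∂ν :=
    uot_transfer γ ν Prod.snd measurable_snd fs ψ hfsm hψm hfs0 hmarg2
  have hA : MeasureTheory.Integrable (fun z => ‖z.1 - z.2‖ ^ 2 / 2 - φ z.1) γ := hc.sub hφγ
  have hsplit : ∫ z, (‖z.1 - z.2‖ ^ 2 / 2 - φ z.1 - ψ z.2) ∂γ
      = (∫ z, ‖z.1 - z.2‖ ^ 2 / 2 ∂γ) - (∫ z, φ z.1 ∂γ) - (∫ z, ψ z.2 ∂γ) := by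
    rw [MeasureTheory.integral_sub hA hψγ, MeasureTheory.integral_sub hc hφγ]
  have hmid1 : (∫ x, Real.exp (-φ x) *
          (fr x * Real.exp (φ x) * Real.log (fr x * Real.exp (φ x))
            - fr x * Real.exp (φ x) + 1) ∂μ)
      = (∫ x, (fr x * Real.log (fr x) - fr x + 1) ∂μ)
        + (∫ x, φ x * fr x ∂μ)
        + ((∫ x, Real.exp (-φ x) ∂μ) - ∫ x, (1 : ℝ) ∂μ) := by
    have heq : (fun x => Real.exp (-φ x) *
          (fr x * Real.exp (φ x) * Real.log (fr x * Real.exp (φ x))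
            - fr x * Real.exp (φ x) + 1))
        = fun x => (fr x * Real.log (fr x) - fr x + 1) + φ x * fr x
            + (Real.exp (-φ x) - 1) :=
      funext fun x => uot_ptwise (fr x) (φ x) (hfr0 x)
    have hB : MeasureTheory.Integrable
        (fun x => (fr x * Real.log (fr x) - fr x + 1) + φ x * fr x) μ := hF1.add hφfr
    have hC : MeasureTheory.Integrable (fun x => Real.exp (-φ x) - 1) μ :=
      hζ.sub (MeasureTheory.integrable_const 1)
    rw [heq, MeasureTheory.integral_add hB hC,
      MeasureTheory.integral_add hF1 hφfr,
      MeasureTheory.integral_sub hζ (MeasureTheory.integrable_const 1)]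
  have hmid2 : (∫ y, Real.exp (-ψ y) *
          (fs y * Real.exp (ψ y) * Real.log (fs y * Real.exp (ψ y))
            - fs y * Real.exp (ψ y) + 1) ∂ν)
      = (∫ y, (fs y * Real.log (fs y) - fs y + 1) ∂ν)
        + (∫ y, ψ y * fs y ∂ν)
        + ((∫ y, Real.exp (-ψ y) ∂ν) - ∫ y, (1 : ℝ) ∂ν) := by
    have heq : (fun y => Real.exp (-ψ y) *
          (fs y * Real.exp (ψ y) * Real.log (fs y * Real.exp (ψ y))
            - fs y * Real.exp (ψ y) + 1))
        = fun y => (fs y * Real.log (fs y) - fs y + 1) + ψ y * fs y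
            + (Real.exp (-ψ y) - 1) :=
      funext fun y => uot_ptwise (fs y) (ψ y) (hfs0 y)
    have hB : MeasureTheory.Integrable
        (fun y => (fs y * Real.log (fs y) - fs y + 1) + ψ y * fs y) ν := hF2.add hψfs
    have hC : MeasureTheory.Integrable (fun y => Real.exp (-ψ y) - 1) ν :=
      hξ.sub (MeasureTheory.integrable_const 1)
    rw [heq, MeasureTheory.integral_add hB hC,
      MeasureTheory.integral_add hF2 hψfs,
      MeasureTheory.integral_sub hξ (MeasureTheory.integrable_const 1)]
  have h1mu : ∫ x, (1 - Real.exp (-φ x)) ∂μ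
      = (∫ x, (1 : ℝ) ∂μ) - ∫ x, Real.exp (-φ x) ∂μ :=
    MeasureTheory.integral_sub (MeasureTheory.integrable_const 1) hζ
  have h1nu : ∫ y, (1 - Real.exp (-ψ y)) ∂ν
      = (∫ y, (1 : ℝ) ∂ν) - ∫ y, Real.exp (-ψ y) ∂ν :=
    MeasureTheory.integral_sub (MeasureTheory.integrable_const 1) hξ
  refine ⟨?_, ?_, ?_, ?_⟩
  · rw [h1mu, h1nu, hsplit, hmid1, hmid2, hP, hQ]; ring
  · refine MeasureTheory.integral_nonneg fun z => ?_
    have := hfeas z.1 z.2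
    simp only [Pi.zero_apply]
    linarith
  · refine MeasureTheory.integral_nonneg fun x => ?_
    exact mul_nonneg (Real.exp_nonneg _)
      (uot_F_nonneg _ (mul_nonneg (hfr0 x) (Real.exp_nonneg _)))
  · refine MeasureTheory.integral_nonneg fun y => ?_
    exact mul_nonneg (Real.exp_nonneg _)
      (uot_F_nonneg _ (mul_nonneg (hfs0 y) (Real.exp_nonneg _)))
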